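/- arXiv:2304.00288 — 4 statements merged into one kernel-verified Lean document; each statement's English description precedes it below -/
import Mathlib

section
/- If f : L_n^r → L_n is Moisil representable (i.e., there is a term t in the signature (∨, ∧, N, 0, 1, Δ_1, ..., Δ_n) over variables x_1,...,x_r such that for every valuation φ of the variables in L_n, f(φ(x_1),...,φ(x_r)) equals the evaluation of t under φ), then for all a_1,...,a_r ∈ L_n, f(a_1,...,a_r) ∈ {0, 1, a_1, ..., a_r, 1-a_1, ..., 1-a_r}. -/
/-- The underlying set of the standard LM_n-algebra: {0, 1/n, ..., (n-1)/n, 1} ⊆ ℚ. -/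
def Ln (n : ℕ) : Set ℚ := {x | ∃ j : ℕ, j ≤ n ∧ x = (j : ℚ) / n}

/-- The Chrysippian endomorphism Δ_i on ℚ: on L_n, Δ_i(j/n) = 1 iff i + j ≥ n + 1. -/
def Delta (n i : ℕ) (x : ℚ) : ℚ := if (n : ℚ) + 1 ≤ (i : ℚ) + x * n then 1 else 0

/-- Terms in the signature (∨, ∧, N, 0, 1, Δ_1, ..., Δ_n) over variables x_1, ..., x_r. -/
inductive LMTerm (r : ℕ) where
  | var (i : Fin r)
  | zero
  | one
  | neg (t : LMTerm r)
  | sup (t u : LMTerm r)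
  | inf (t u : LMTerm r)
  | delta (i : ℕ) (t : LMTerm r)

/-- Evaluation of a term in the standard LM_n-algebra under a valuation φ. -/
def LMTerm.eval (n : ℕ) {r : ℕ} (φ : Fin r → ℚ) : LMTerm r → ℚ
  | .var i => φ i
  | .zero => 0
  | .one => 1
  | .neg t => 1 - t.eval n φ
  | .sup t u => max (t.eval n φ) (u.eval n φ)
  | .inf t u => min (t.eval n φ) (u.eval n φ)
  | .delta i t => Delta n i (t.eval n φ)

/-- A function is Moisil representable if some term evaluates to it under
every valuation into L_n. -/
def Representable (n r : ℕ) (f : (Fin r → ℚ) → ℚ) : Prop :=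
  ∃ t : LMTerm r, ∀ φ : Fin r → ℚ, (∀ i, φ i ∈ Ln n) → t.eval n φ = f φ

/-- The set {0, 1, a_1, ..., a_r, 1 - a_1, ..., 1 - a_r}. -/
def Mset (r : ℕ) (a : Fin r → ℚ) : Set ℚ :=
  {x | x = 0 ∨ x = 1 ∨ ∃ i : Fin r, x = a i ∨ x = 1 - a i}

lemma eval_mem_Mset (n r : ℕ) (t : LMTerm r) (a : Fin r → ℚ) :
    t.eval n a ∈ Mset r a := by
  induction t with
  | var i => exact Or.inr (Or.inr ⟨i, Or.inl rfl⟩)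
  | zero => exact Or.inl rfl
  | one => exact Or.inr (Or.inl rfl)
  | neg t ih =>
    rcases ih with h | h | ⟨i, h | h⟩
    · exact Or.inr (Or.inl (by simp [LMTerm.eval, h]))
    · exact Or.inl (by simp [LMTerm.eval, h])
    · exact Or.inr (Or.inr ⟨i, Or.inr (by simp [LMTerm.eval, h])⟩)
    · exact Or.inr (Or.inr ⟨i, Or.inl (by simp [LMTerm.eval, h])⟩)
  | sup t u iht ihu =>
    rcases max_choice (t.eval n a) (u.eval n a) with h | h
    · simpa [LMTerm.eval, h] using iht
    · simpa [LMTerm.eval, h] using ihu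
  | inf t u iht ihu =>
    rcases min_choice (t.eval n a) (u.eval n a) with h | h
    · simpa [LMTerm.eval, h] using iht
    · simpa [LMTerm.eval, h] using ihu
  | delta i t _ =>
    simp only [LMTerm.eval, Delta]
    split
    · exact Or.inr (Or.inl rfl)
    · exact Or.inl rfl

/-- If f is Moisil representable, then f(a_1,...,a_r) always lies in
{0, 1, a_1, ..., a_r, 1-a_1, ..., 1-a_r}. -/
theorem representable_range (n r : ℕ) (hn : 2 ≤ n) (hr : 1 ≤ r)
    (f : (Fin r → ℚ) → ℚ) (hf : Representable n r f) :
    ∀ a : Fin r → ℚ, (∀ i, a i ∈ Ln n) → f a ∈ Mset r a := by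
  obtain ⟨t, ht⟩ := hf
  intro a ha
  rw [← ht a ha]
  exact eval_mem_Mset n r t a
end

section
/- If f : L_n^r → L_n satisfies f(a_1,...,a_r) ∈ {0, 1, a_1, ..., a_r, 1-a_1, ..., 1-a_r} for all a_1,...,a_r ∈ L_n, then f is Moisil representable: there is a term in the signature (∨, ∧, N, 0, 1, Δ_1, ..., Δ_n) over variables x_1,...,x_r whose evaluation under any valuation φ equals f(φ(x_1),...,φ(x_r)). -/
/-- Characteristic term: evaluates to 1 on j/n and 0 on other elements of L_n. -/
def chiT (n : ℕ) {r : ℕ} (j : ℕ) (i : Fin r) : LMTerm r :=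
  .inf (.delta (n+1-j) (.var i)) (.neg (.delta (n-j) (.var i)))

lemma eval_chiT {n r : ℕ} (hn : 1 ≤ n) (j k : ℕ) (hj : j ≤ n) (hk : k ≤ n)
    (φ : Fin r → ℚ) (i : Fin r) (hφ : φ i = (k : ℚ) / n) :
    (chiT n j i).eval n φ = if j = k then 1 else 0 := by
  have hn0 : (n : ℚ) ≠ 0 := by
    have : (0:ℚ) < n := by exact_mod_cast Nat.lt_of_lt_of_le Nat.zero_lt_one hn
    exact ne_of_gt this
  simp only [chiT, LMTerm.eval, Delta, hφ]
  have hx : ((k : ℚ)/n) * n = k := div_mul_cancel₀ _ hn0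
  rw [hx]
  have c1 : ((n+1-j : ℕ) : ℚ) = (n : ℚ) + 1 - j := by
    have hj' : j ≤ n + 1 := le_trans hj (Nat.le_succ n)
    push_cast [hj']; ring
  have c2 : ((n-j : ℕ) : ℚ) = (n : ℚ) - j := by push_cast [hj]; ring
  rw [c1, c2]
  have h1 : ((n:ℚ)+1 ≤ (n:ℚ)+1-j+k) ↔ (j ≤ k) := by
    constructor <;> intro h
    · have : (j:ℚ) ≤ k := by linarith
      exact_mod_cast this
    · have : (j:ℚ) ≤ k := by exact_mod_cast h
      linarith
  have h2 : ((n:ℚ)+1 ≤ (n:ℚ)-j+k) ↔ (j < k) := by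
    constructor <;> intro h
    · have : (j:ℚ)+1 ≤ k := by linarith
      exact_mod_cast this
    · have : (j:ℚ)+1 ≤ k := by exact_mod_cast h
      linarith
  rw [if_congr h1 rfl rfl, if_congr h2 rfl rfl]
  by_cases hjk : j = k
  · subst hjk
    simp
  · rcases lt_or_gt_of_ne hjk with h | h
    · rw [if_pos (le_of_lt h), if_pos h, if_neg hjk]
      norm_num
    · rw [if_neg (not_le.2 h), if_neg (by omega : ¬ j < k), if_neg hjk]
      norm_num

lemma eval_inf {n r : ℕ} (φ : Fin r → ℚ) (t u : LMTerm r) :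
    (LMTerm.inf t u).eval n φ = min (t.eval n φ) (u.eval n φ) := rfl

lemma eval_conj {n r : ℕ} (hn : 1 ≤ n) (a : Fin r → Fin (n+1)) (k : Fin r → ℕ)
    (hk : ∀ i, k i ≤ n) (φ : Fin r → ℚ) (hφ : ∀ i, φ i = (k i : ℚ)/n)
    (s : LMTerm r) (hs0 : 0 ≤ s.eval n φ) (hs1 : s.eval n φ ≤ 1) :
    ∀ l : List (Fin r),
    ((l.foldr (fun i acc => .inf (chiT n (a i) i) acc) s : LMTerm r)).eval n φ
      = if ∀ i ∈ l, (a i : ℕ) = k i then s.eval n φ else 0 := by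
  intro l; induction l with
  | nil => simp
  | cons x xs ih =>
    rw [List.foldr_cons, eval_inf, eval_chiT hn (a x) (k x) (Fin.is_le (a x)) (hk x) φ x (hφ x), ih]
    by_cases hx : (a x : ℕ) = k x
    · by_cases hxs : ∀ i ∈ xs, (a i : ℕ) = k i
      · have : ∀ i ∈ x :: xs, (a i : ℕ) = k i := by
          intro i hi; rcases List.mem_cons.1 hi with rfl | hi
          · exact hx
          · exact hxs i hi
        rw [if_pos hx, if_pos hxs, if_pos this, min_eq_right hs1]
      · have : ¬ ∀ i ∈ x :: xs, (a i : ℕ) = k i := by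
          intro h; exact hxs fun i hi => h i (List.mem_cons_of_mem _ hi)
        rw [if_pos hx, if_neg hxs, if_neg this]
        simp
    · have : ¬ ∀ i ∈ x :: xs, (a i : ℕ) = k i := by
        intro h; exact hx (h x (List.mem_cons_self))
      rw [if_neg hx, if_neg this]
      have hy : (0:ℚ) ≤ if ∀ i ∈ xs, (a i : ℕ) = k i then s.eval n φ else 0 := by
        split <;> simp [hs0]
      exact min_eq_left hy

lemma eval_bigSup {n r : ℕ} (φ : Fin r → ℚ) :
    ∀ l : List (LMTerm r),
      ((l.foldr .sup .zero : LMTerm r)).eval n φ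
        = l.foldr (fun t acc => max (t.eval n φ) acc) 0
  | [] => rfl
  | t :: l => by
      simp only [List.foldr_cons, LMTerm.eval]
      rw [eval_bigSup φ l]

lemma foldr_max_zero {α : Type*} (g : α → ℚ) :
    ∀ L : List α, (∀ x ∈ L, g x = 0) →
      L.foldr (fun x acc => max (g x) acc) 0 = 0 := by
  intro L; induction L with
  | nil => intro _; rfl
  | cons y ys ih =>
    intro h
    simp only [List.foldr_cons]
    rw [ih (fun x hx => h x (List.mem_cons_of_mem _ hx)), h y (List.mem_cons_self)]
    simp

lemma foldr_max_eq {α : Type*} (g : α → ℚ) (c : ℚ) (hc : 0 ≤ c) :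
    ∀ L : List α, (∀ x ∈ L, g x = 0 ∨ g x = c) → (∃ x ∈ L, g x = c) →
      L.foldr (fun x acc => max (g x) acc) 0 = c := by
  intro L; induction L with
  | nil => rintro _ ⟨x, hx, _⟩; simp at hx
  | cons y ys ih =>
    intro hall hex
    simp only [List.foldr_cons]
    by_cases hys : ∃ x ∈ ys, g x = c
    · rw [ih (fun x hx => hall x (List.mem_cons_of_mem _ hx)) hys]
      rcases hall y (List.mem_cons_self) with h | h
      · rw [h]; exact max_eq_right hc
      · rw [h]; exact max_self c
    · have hy : g y = c := by
        rcases hex with ⟨x, hx, hgx⟩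
        rcases List.mem_cons.1 hx with rfl | hx
        · exact hgx
        · exact absurd ⟨x, hx, hgx⟩ hys
      have h0 : ∀ x ∈ ys, g x = 0 := by
        intro x hx
        rcases hall x (List.mem_cons_of_mem _ hx) with h | h
        · exact h
        · exact absurd ⟨x, hx, h⟩ hys
      rw [foldr_max_zero g ys h0, hy]
      exact max_eq_left hc

/-- If f(a_1,...,a_r) ∈ {0, 1, a_1, ..., a_r, 1-a_1, ..., 1-a_r} for all inputs in L_n,
then f is Moisil representable. -/
theorem range_implies_representable (n r : ℕ) (hn : 2 ≤ n) (hr : 1 ≤ r)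
    (f : (Fin r → ℚ) → ℚ)
    (hf : ∀ a : Fin r → ℚ, (∀ i, a i ∈ Ln n) → f a ∈ Mset r a) :
    Representable n r f := by
  classical
  have hn1 : 1 ≤ n := le_trans one_le_two hn
  have hnq : (0:ℚ) < n := by exact_mod_cast Nat.lt_of_lt_of_le Nat.zero_lt_one hn1
  -- valuation attached to a tuple
  set av : (Fin r → Fin (n+1)) → (Fin r → ℚ) := fun a i => ((a i : ℕ) : ℚ)/n with hav
  have havLn : ∀ a : Fin r → Fin (n+1), ∀ i, av a i ∈ Ln n :=
    fun a i => ⟨a i, Fin.is_le _, rfl⟩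
  -- pick the representing basic term for each tuple
  have hex : ∀ a : Fin r → Fin (n+1), ∃ s : LMTerm r,
      (∀ φ : Fin r → ℚ, (∀ i, 0 ≤ φ i ∧ φ i ≤ 1) → 0 ≤ s.eval n φ ∧ s.eval n φ ≤ 1) ∧
      s.eval n (av a) = f (av a) := by
    intro a
    rcases hf (av a) (havLn a) with h0 | h1 | ⟨i, hi | hi⟩
    · exact ⟨.zero, fun φ _ => by norm_num [LMTerm.eval], by simp [LMTerm.eval, h0]⟩
    · exact ⟨.one, fun φ _ => by norm_num [LMTerm.eval], by simp [LMTerm.eval, h1]⟩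
    · exact ⟨.var i, fun φ hφ => by simpa [LMTerm.eval] using hφ i,
        by simp [LMTerm.eval, hi]⟩
    · refine ⟨.neg (.var i), fun φ hφ => ?_, ?_⟩
      · obtain ⟨h1, h2⟩ := hφ i
        constructor <;> simp [LMTerm.eval] <;> linarith
      · simp [LMTerm.eval, hi]
  choose S hSb hSe using hex
  refine ⟨((Finset.univ : Finset (Fin r → Fin (n+1))).toList.map
      (fun a => (List.finRange r).foldr
        (fun i acc => .inf (chiT n (a i) i) acc) (S a))).foldr .sup .zero, ?_⟩
  intro φ hφ
  choose k hk hφk using hφ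
  set a0 : Fin r → Fin (n+1) := fun i => ⟨k i, Nat.lt_succ_of_le (hk i)⟩ with ha0
  have hφa0 : φ = av a0 := funext fun i => by simp [av, a0, hφk i]
  have hφb : ∀ i, 0 ≤ φ i ∧ φ i ≤ 1 := by
    intro i
    rw [hφk i]
    constructor
    · positivity
    · rw [div_le_one hnq]
      exact_mod_cast hk i
  -- the value of each disjunct
  have hg : ∀ a : Fin r → Fin (n+1),
      (((List.finRange r).foldr (fun i acc => .inf (chiT n (a i) i) acc) (S a)
        : LMTerm r)).eval n φ
      = if ∀ i, (a i : ℕ) = k i then (S a).eval n φ else 0 := by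
    intro a
    rw [eval_conj hn1 a k hk φ hφk (S a) (hSb a φ hφb).1 (hSb a φ hφb).2]
    simp [List.mem_finRange]
  have hc : (S a0).eval n φ = f φ := by
    rw [hφa0]; exact hSe a0
  have hfpos : 0 ≤ f φ := by
    rcases hf φ (fun i => ⟨k i, hk i, hφk i⟩) with h | h | ⟨i, h | h⟩
    · rw [h]
    · rw [h]; norm_num
    · rw [h]; exact (hφb i).1
    · rw [h]; linarith [(hφb i).2]
  rw [eval_bigSup, List.foldr_map]
  refine foldr_max_eq _ (f φ) hfpos _ ?_ ?_
  · intro a _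
    rw [hg a]
    split
    · right
      rename_i h
      have : a = a0 := funext fun i => Fin.ext (h i)
      rw [this, hc]
    · left; rfl
  · refine ⟨a0, Finset.mem_toList.2 (Finset.mem_univ _), ?_⟩
    rw [hg a0]
    rw [if_pos (fun i => rfl), hc]
end

section
/- A function f : L_n^r → L_n is Moisil representable if and only if for all a_1,...,a_r ∈ L_n, f(a_1,...,a_r) ∈ {0, 1, a_1, ..., a_r, 1-a_1, ..., 1-a_r}. -/
/- ### Auxiliary lemmas -/

lemma Delta_cases (n i : ℕ) (x : ℚ) : Delta n i x = 0 ∨ Delta n i x = 1 := by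
  unfold Delta; split
  · right; rfl
  · left; rfl

lemma mem_Ln_bounds {n : ℕ} (hn : 0 < n) {x : ℚ} (hx : x ∈ Ln n) : 0 ≤ x ∧ x ≤ 1 := by
  obtain ⟨j, hj, rfl⟩ := hx
  have hn' : (0:ℚ) < n := by exact_mod_cast hn
  refine ⟨by positivity, ?_⟩
  rw [div_le_one hn']
  exact_mod_cast hj

lemma mset_bounds {n r : ℕ} (hn : 0 < n) {a : Fin r → ℚ} (ha : ∀ i, a i ∈ Ln n)
    {x : ℚ} (hx : x ∈ Mset r a) : 0 ≤ x ∧ x ≤ 1 := by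
  obtain h | h | ⟨i, h | h⟩ := hx <;> subst h
  · norm_num
  · norm_num
  · exact mem_Ln_bounds hn (ha i)
  · have h := mem_Ln_bounds hn (ha i)
    constructor <;> linarith [h.1, h.2]

/-- Forward direction: every term evaluates into the Mset (no hypotheses needed). -/
lemma eval_mem_mset {n r : ℕ} (t : LMTerm r) (φ : Fin r → ℚ) :
    t.eval n φ ∈ Mset r φ := by
  induction t with
  | var i => exact Or.inr (Or.inr ⟨i, Or.inl rfl⟩)
  | zero => exact Or.inl rfl
  | one => exact Or.inr (Or.inl rfl)
  | neg t ih =>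
    show 1 - t.eval n φ ∈ Mset r φ
    obtain h | h | ⟨i, h | h⟩ := ih <;> rw [h]
    · exact Or.inr (Or.inl (by ring))
    · exact Or.inl (by ring)
    · exact Or.inr (Or.inr ⟨i, Or.inr rfl⟩)
    · exact Or.inr (Or.inr ⟨i, Or.inl (by ring)⟩)
  | sup t u iht ihu =>
    show max (t.eval n φ) (u.eval n φ) ∈ Mset r φ
    rcases max_choice (t.eval n φ) (u.eval n φ) with h | h <;> rw [h]
    exacts [iht, ihu]
  | inf t u iht ihu =>
    show min (t.eval n φ) (u.eval n φ) ∈ Mset r φ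
    rcases min_choice (t.eval n φ) (u.eval n φ) with h | h <;> rw [h]
    exacts [iht, ihu]
  | delta i t ih =>
    show Delta n i (t.eval n φ) ∈ Mset r φ
    rcases Delta_cases n i (t.eval n φ) with h | h <;> rw [h]
    · exact Or.inl rfl
    · exact Or.inr (Or.inl rfl)

/- ### Characteristic terms -/

def chiTerm (n : ℕ) {r : ℕ} (i : Fin r) (j : ℕ) : LMTerm r :=
  .inf (.delta (n + 1 - j) (.var i)) (.neg (.delta (n - j) (.var i)))

lemma delta_eval {n : ℕ} (hn : 0 < n) (m k : ℕ) :
    Delta n m ((k:ℚ)/n) = if n + 1 ≤ m + k then 1 else 0 := by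
  have hn' : (n:ℚ) ≠ 0 := Nat.cast_ne_zero.mpr hn.ne'
  unfold Delta
  rw [div_mul_cancel₀ _ hn']
  have : ((n:ℚ) + 1 ≤ (m:ℚ) + (k:ℚ)) ↔ (n + 1 ≤ m + k) := by
    constructor <;> intro h <;> exact_mod_cast h
  simp [this]

lemma chiTerm_eval {n r : ℕ} (hn : 0 < n) (i : Fin r) (j k : ℕ) (hj : j ≤ n)
    (φ : Fin r → ℚ) (hφ : φ i = (k:ℚ)/n) :
    (chiTerm n i j).eval n φ = if k = j then 1 else 0 := by
  have e : (chiTerm n i j).eval n φ =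
      min (Delta n (n + 1 - j) (φ i)) (1 - Delta n (n - j) (φ i)) := rfl
  rw [e, hφ, delta_eval hn, delta_eval hn]
  rcases lt_trichotomy k j with h | h | h
  · have h1 : ¬ (n + 1 ≤ (n + 1 - j) + k) := by omega
    have h2 : ¬ (n + 1 ≤ (n - j) + k) := by omega
    have h3 : ¬ (k = j) := by omega
    simp [h1, h2, h3]
  · subst h
    have h1 : (n + 1 ≤ (n + 1 - k) + k) := by omega
    have h2 : ¬ (n + 1 ≤ (n - k) + k) := by omega
    simp [h1, h2]
  · have h1 : (n + 1 ≤ (n + 1 - j) + k) := by omega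
    have h2 : (n + 1 ≤ (n - j) + k) := by omega
    have h3 : ¬ (k = j) := by omega
    simp [h1, h2, h3]

/- ### Finite conjunctions and disjunctions -/

def andAll {r : ℕ} : List (LMTerm r) → LMTerm r
  | [] => .one
  | t :: ts => .inf t (andAll ts)

def orAll {r : ℕ} : List (LMTerm r) → LMTerm r
  | [] => .zero
  | t :: ts => .sup t (orAll ts)

lemma andAll_eval {n r : ℕ} (φ : Fin r → ℚ) :
    ∀ ts : List (LMTerm r), (∀ t ∈ ts, t.eval n φ = 0 ∨ t.eval n φ = 1) →
    (andAll ts).eval n φ = if ∀ t ∈ ts, t.eval n φ = 1 then 1 else 0 := by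
  intro ts
  induction ts with
  | nil => intro _; simp [andAll, LMTerm.eval]
  | cons t ts ih =>
    intro h
    have e : (andAll (t :: ts)).eval n φ = min (t.eval n φ) ((andAll ts).eval n φ) := rfl
    rw [e, ih (fun s hs => h s (List.mem_cons_of_mem _ hs))]
    rcases h t (List.mem_cons_self) with h0 | h1
    · have hne : ¬ (∀ s ∈ t :: ts, s.eval n φ = 1) := by
        intro hall
        have := hall t (List.mem_cons_self)
        rw [this] at h0; norm_num at h0
      rw [if_neg hne, h0]
      by_cases hts : ∀ s ∈ ts, s.eval n φ = 1
      · rw [if_pos hts]; norm_num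
      · rw [if_neg hts]; norm_num
    · by_cases hts : ∀ s ∈ ts, s.eval n φ = 1
      · have hall : ∀ s ∈ t :: ts, s.eval n φ = 1 := by
          intro s hs
          rcases List.mem_cons.mp hs with rfl | hs
          · exact h1
          · exact hts s hs
        rw [if_pos hts, if_pos hall, h1]; norm_num
      · have hne : ¬ (∀ s ∈ t :: ts, s.eval n φ = 1) := by
          intro hall; exact hts (fun s hs => hall s (List.mem_cons_of_mem _ hs))
        rw [if_neg hts, if_neg hne, h1]; norm_num
    
lemma orAll_eval_eq {n r : ℕ} (φ : Fin r → ℚ) (c : ℚ) (hc : 0 ≤ c) :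
    ∀ ts : List (LMTerm r), (∀ t ∈ ts, t.eval n φ ≤ c) →
    (∃ t ∈ ts, t.eval n φ = c) → (orAll ts).eval n φ = c := by
  intro ts
  induction ts with
  | nil => rintro _ ⟨t, ht, _⟩; simp at ht
  | cons t ts ih =>
    rintro hle ⟨s, hs, hsc⟩
    have e : (orAll (t :: ts)).eval n φ = max (t.eval n φ) ((orAll ts).eval n φ) := rfl
    have hub : ∀ ts' : List (LMTerm r), (∀ t ∈ ts', t.eval n φ ≤ c) →
        (orAll ts').eval n φ ≤ c := by
      intro ts'
      induction ts' with
      | nil => intro _; simpa [orAll, LMTerm.eval] using hc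
      | cons u us ihu =>
        intro h
        have e' : (orAll (u :: us)).eval n φ = max (u.eval n φ) ((orAll us).eval n φ) := rfl
        rw [e']
        exact max_le (h u (List.mem_cons_self))
          (ihu (fun s hs => h s (List.mem_cons_of_mem _ hs)))
    rcases List.mem_cons.mp hs with rfl | hs'
    · rw [e, hsc]
      exact max_eq_left (hub ts (fun s' hs' => hle s' (List.mem_cons_of_mem _ hs')))
    · rw [e, ih (fun s' hs'' => hle s' (List.mem_cons_of_mem _ hs'')) ⟨s, hs', hsc⟩]
      exact max_eq_right (hle t (List.mem_cons_self))

/-- Main theorem: f is Moisil representable iff f(a⃗) always lies in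
{0, 1, a_1, ..., a_r, 1-a_1, ..., 1-a_r}. -/
theorem representable_iff (n r : ℕ) (hn : 2 ≤ n) (hr : 1 ≤ r)
    (f : (Fin r → ℚ) → ℚ) :
    Representable n r f ↔
      ∀ a : Fin r → ℚ, (∀ i, a i ∈ Ln n) → f a ∈ Mset r a := by
  have hn0 : 0 < n := by omega
  constructor
  · rintro ⟨t, ht⟩ a ha
    rw [← ht a ha]
    exact eval_mem_mset t a
  · intro hf
    classical
    -- the rational tuple corresponding to an assignment v : Fin r → Fin (n+1)
    set av : (Fin r → Fin (n + 1)) → (Fin r → ℚ) :=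
      fun v i => ((v i : ℕ) : ℚ) / n with hav
    have hamem : ∀ v : Fin r → Fin (n + 1), ∀ i, av v i ∈ Ln n := by
      intro v i
      exact ⟨(v i : ℕ), Nat.lt_succ_iff.mp (v i).isLt, rfl⟩
    -- choose a term g_v with g_v(a_v) = f(a_v)
    have hg : ∀ v : Fin r → Fin (n + 1), ∃ g : LMTerm r,
        g.eval n (av v) = f (av v) := by
      intro v
      obtain h | h | ⟨i, h | h⟩ := hf (av v) (hamem v)
      · exact ⟨.zero, h.symm⟩
      · exact ⟨.one, h.symm⟩
      · exact ⟨.var i, h.symm⟩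
      · exact ⟨.neg (.var i), by show 1 - av v i = f (av v); rw [h]⟩
    choose G hG using hg
    -- the characteristic term of an assignment v
    set chi : (Fin r → Fin (n + 1)) → LMTerm r :=
      fun v => andAll ((List.finRange r).map (fun i => chiTerm n i (v i))) with hchi
    refine ⟨orAll (((Finset.univ : Finset (Fin r → Fin (n + 1))).toList).map
      (fun v => .inf (chi v) (G v))), ?_⟩
    intro φ hφ
    -- extract the natural-number coordinates of φ
    have hk : ∀ i, ∃ k : ℕ, k ≤ n ∧ φ i = (k : ℚ) / n := hφ
    choose k hk1 hk2 using hk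
    set vφ : Fin r → Fin (n + 1) := fun i => ⟨k i, Nat.lt_succ_of_le (hk1 i)⟩ with hvφ
    have hφav : φ = av vφ := by
      funext i
      rw [hk2 i]
    have hbounds := mset_bounds hn0 hφ (hf φ hφ)
    -- evaluation of chi v
    have hchiv : ∀ v : Fin r → Fin (n + 1),
        (chi v).eval n φ = if ∀ i, k i = (v i : ℕ) then 1 else 0 := by
      intro v
      have hvle : ∀ i : Fin r, (v i : ℕ) ≤ n := fun i => Nat.lt_succ_iff.mp (v i).isLt
      have h01 : ∀ t ∈ (List.finRange r).map (fun i => chiTerm n i (v i)),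
          t.eval n φ = 0 ∨ t.eval n φ = 1 := by
        intro t ht
        obtain ⟨i, _, rfl⟩ := List.mem_map.mp ht
        rw [chiTerm_eval hn0 i (v i) (k i) (hvle i) φ (hk2 i)]
        split
        · right; rfl
        · left; rfl
      rw [hchi]
      rw [andAll_eval φ _ h01]
      have hiff : (∀ t ∈ (List.finRange r).map (fun i => chiTerm n i (v i)),
          t.eval n φ = 1) ↔ (∀ i, k i = (v i : ℕ)) := by
        constructor
        · intro hall i
          have := hall (chiTerm n i (v i)) (List.mem_map.mpr ⟨i, List.mem_finRange i, rfl⟩)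
          rw [chiTerm_eval hn0 i (v i) (k i) (hvle i) φ (hk2 i)] at this
          by_contra hne
          rw [if_neg hne] at this
          norm_num at this
        · intro hall t ht
          obtain ⟨i, -, rfl⟩ := List.mem_map.mp ht
          rw [chiTerm_eval hn0 i (v i) (k i) (hvle i) φ (hk2 i), if_pos (hall i)]
      by_cases hcond : ∀ i, k i = (v i : ℕ)
      · rw [if_pos (hiff.mpr hcond), if_pos hcond]
      · rw [if_neg (fun h => hcond (hiff.mp h)), if_neg hcond]
    -- all disjuncts are ≤ f φ
    have hle : ∀ t ∈ (((Finset.univ : Finset (Fin r → Fin (n + 1))).toList).map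
        (fun v => LMTerm.inf (chi v) (G v))), t.eval n φ ≤ f φ := by
      intro t ht
      obtain ⟨v, -, rfl⟩ := List.mem_map.mp ht
      have e : (LMTerm.inf (chi v) (G v)).eval n φ
          = min ((chi v).eval n φ) ((G v).eval n φ) := rfl
      rw [e, hchiv v]
      by_cases hv : ∀ i, k i = (v i : ℕ)
      · have hveq : v = vφ := by
          funext i
          exact Fin.ext (hv i).symm
        rw [if_pos hv, hveq]
        have hGf : (G vφ).eval n φ = f φ := by rw [hφav]; exact hG vφ
        rw [hGf]
        exact min_le_right _ _
      · rw [if_neg hv]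
        calc min 0 ((G v).eval n φ) ≤ 0 := min_le_left _ _
        _ ≤ f φ := hbounds.1
    -- the disjunct at vφ equals f φ
    have hex : ∃ t ∈ (((Finset.univ : Finset (Fin r → Fin (n + 1))).toList).map
        (fun v => LMTerm.inf (chi v) (G v))), t.eval n φ = f φ := by
      refine ⟨LMTerm.inf (chi vφ) (G vφ), List.mem_map.mpr ⟨vφ,
        Finset.mem_toList.mpr (Finset.mem_univ _), rfl⟩, ?_⟩
      have e : (LMTerm.inf (chi vφ) (G vφ)).eval n φ
          = min ((chi vφ).eval n φ) ((G vφ).eval n φ) := rfl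
      rw [e, hchiv vφ, if_pos (fun i => rfl)]
      have : (G vφ).eval n φ = f φ := by rw [hφav]; exact hG vφ
      rw [this]
      exact min_eq_right hbounds.2
    exact orAll_eval_eq φ (f φ) hbounds.1 _ hle hex
end

section
/- For n odd and k ∈ {1, ..., (n+1)/2}, the number of subalgebras of L_n with exactly 2k elements is the binomial coefficient C((n-1)/2, k-1). -/
/-- A subalgebra of the standard LM_n-algebra: a subset of L_n containing 0 and 1 and
closed under max, min, x ↦ 1 - x and each Δ_i. -/
def IsSubalg (n : ℕ) (A : Set ℚ) : Prop :=
  A ⊆ Ln n ∧ (0 : ℚ) ∈ A ∧ (1 : ℚ) ∈ A ∧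
  (∀ x ∈ A, 1 - x ∈ A) ∧
  (∀ x ∈ A, ∀ y ∈ A, max x y ∈ A ∧ min x y ∈ A) ∧
  (∀ i : ℕ, 1 ≤ i → i ≤ n → ∀ x ∈ A, Delta n i x ∈ A)

/-- The lower half {1/n, 2/n, ..., ((n-1)/2)/n} of L_n. -/
def Hset (n : ℕ) : Set ℚ := {x | ∃ j : ℕ, 1 ≤ j ∧ j ≤ (n - 1) / 2 ∧ x = (j : ℚ) / n}


def gF (n : ℕ) (S : Finset ℕ) : Finset ℚ :=
  insert 0 (insert 1 (S.image (fun j : ℕ => (j:ℚ)/n) ∪ S.image (fun j => ((n - j : ℕ):ℚ)/n)))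

lemma ncast_pos {n : ℕ} (hn : 0 < n) : (0:ℚ) < n := by exact_mod_cast hn

lemma div_inj {n : ℕ} (hn : 0 < n) {a b : ℕ} : (a:ℚ)/n = (b:ℚ)/n ↔ a = b := by
  have h : (n:ℚ) ≠ 0 := ne_of_gt (ncast_pos hn)
  constructor
  · intro h'
    field_simp at h'
    exact_mod_cast h'
  · rintro rfl; rfl

lemma oneSubDiv {n j : ℕ} (hn : 0 < n) (hj : j ≤ n) :
    1 - (j:ℚ)/n = ((n-j:ℕ):ℚ)/n := by
  have h : (n:ℚ) ≠ 0 := ne_of_gt (ncast_pos hn)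
  rw [Nat.cast_sub hj]
  field_simp

lemma mem_gF {n : ℕ} {S : Finset ℕ} {x : ℚ} :
    x ∈ gF n S ↔ x = 0 ∨ x = 1 ∨ (∃ j ∈ S, x = (j:ℚ)/n) ∨ (∃ j ∈ S, x = ((n-j:ℕ):ℚ)/n) := by
  simp [gF, eq_comm]

lemma card_gF {n m : ℕ} (hm : n = 2*m+1) {S : Finset ℕ} (hS : S ⊆ Finset.Icc 1 m) :
    (gF n S).card = 2 + 2 * S.card := by
  have hn : 0 < n := by omega
  have hb : ∀ j ∈ S, 1 ≤ j ∧ j ≤ m := by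
    intro j hj; have := hS hj; simp [Finset.mem_Icc] at this; exact this
  have h1 : Set.InjOn (fun j : ℕ => (j:ℚ)/n) S := by
    intro a ha b hb h; exact (div_inj hn).1 h
  have h2 : Set.InjOn (fun j : ℕ => ((n-j:ℕ):ℚ)/n) S := by
    intro a ha b hbb h
    have := (div_inj hn).1 h
    have := hb a ha; have := hb b hbb
    omega
  have hdisj : Disjoint (S.image (fun j : ℕ => (j:ℚ)/n)) (S.image (fun j : ℕ => ((n-j:ℕ):ℚ)/n)) := by
    rw [Finset.disjoint_left]
    intro x hx hy
    simp only [Finset.mem_image] at hx hy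
    obtain ⟨a, ha, rfl⟩ := hx
    obtain ⟨b, hbb, hab⟩ := hy
    have := (div_inj hn).1 hab.symm
    have := hb a ha; have := hb b hbb
    omega
  have h1notin : (1:ℚ) ∉ (S.image (fun j : ℕ => (j:ℚ)/n) ∪ S.image (fun j : ℕ => ((n-j:ℕ):ℚ)/n)) := by
    simp only [Finset.mem_union, Finset.mem_image, not_or, not_exists]
    constructor
    · rintro a ⟨ha, h⟩
      have h1 : (1:ℚ) = (n:ℚ)/n := by field_simp
      rw [h1] at h
      have := (div_inj hn).1 h.symm
      have := hb a ha; omega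
    · rintro a ⟨ha, h⟩
      have h1 : (1:ℚ) = (n:ℚ)/n := by field_simp
      rw [h1] at h
      have := (div_inj hn).1 h.symm
      have := hb a ha; omega
  have h0notin : (0:ℚ) ∉ insert 1 (S.image (fun j : ℕ => (j:ℚ)/n) ∪ S.image (fun j : ℕ => ((n-j:ℕ):ℚ)/n)) := by
    simp only [Finset.mem_insert, Finset.mem_union, Finset.mem_image, not_or, not_exists]
    refine ⟨by norm_num, ?_, ?_⟩
    · rintro a ⟨ha, h⟩
      have h0 : (0:ℚ) = ((0:ℕ):ℚ)/n := by norm_num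
      rw [h0] at h
      have := (div_inj hn).1 h.symm
      have := hb a ha; omega
    · rintro a ⟨ha, h⟩
      have h0 : (0:ℚ) = ((0:ℕ):ℚ)/n := by norm_num
      rw [h0] at h
      have := (div_inj hn).1 h.symm
      have := hb a ha; omega
  rw [gF, Finset.card_insert_of_notMem h0notin, Finset.card_insert_of_notMem h1notin,
    Finset.card_union_of_disjoint hdisj, Finset.card_image_of_injOn h1,
    Finset.card_image_of_injOn h2]
  ring

lemma subalg_gF {n m : ℕ} (hm : n = 2*m+1) {S : Finset ℕ} (hS : S ⊆ Finset.Icc 1 m) :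
    IsSubalg n (↑(gF n S) : Set ℚ) := by
  have hn : 0 < n := by omega
  have hb : ∀ j ∈ S, 1 ≤ j ∧ j ≤ m := by
    intro j hj; have := hS hj; simp [Finset.mem_Icc] at this; exact this
  have h0 : (0:ℚ) ∈ gF n S := by simp [gF]
  have h1 : (1:ℚ) ∈ gF n S := by simp [gF]
  refine ⟨?_, h0, h1, ?_, ?_, ?_⟩
  · intro x hx
    rw [Finset.mem_coe, mem_gF] at hx
    rcases hx with rfl | rfl | ⟨j, hj, rfl⟩ | ⟨j, hj, rfl⟩
    · exact ⟨0, by omega, by norm_num⟩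
    · exact ⟨n, le_rfl, by field_simp⟩
    · exact ⟨j, by have := hb j hj; omega, rfl⟩
    · exact ⟨n - j, by omega, rfl⟩
  · intro x hx
    rw [Finset.mem_coe, mem_gF] at hx
    rw [Finset.mem_coe, mem_gF]
    rcases hx with rfl | rfl | ⟨j, hj, rfl⟩ | ⟨j, hj, rfl⟩
    · right; left; norm_num
    · left; norm_num
    · right; right; right
      refine ⟨j, hj, ?_⟩
      rw [oneSubDiv hn (by have := hb j hj; omega : j ≤ n)]
    · right; right; left
      refine ⟨j, hj, ?_⟩
      rw [oneSubDiv hn (by omega : n - j ≤ n)]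
      congr 1
      have := hb j hj
      congr 1
      omega
  · intro x hx y hy
    rcases max_choice x y with h | h <;> rcases min_choice x y with h' | h' <;>
      simp [h, h', hx, hy]
  · intro i _ _ x _
    rw [Delta]
    split
    · exact h1
    · exact h0

lemma repr_gF {n m : ℕ} (hm : n = 2*m+1) {A : Set ℚ} (hA : IsSubalg n A)
    {S : Finset ℕ} (hSdef : ∀ j : ℕ, j ∈ S ↔ (1 ≤ j ∧ j ≤ m ∧ (j:ℚ)/n ∈ A)) :
    A = (↑(gF n S) : Set ℚ) := by
  have hn : 0 < n := by omega
  obtain ⟨hsub, h0, h1, hneg, -, -⟩ := hA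
  ext x
  rw [Finset.mem_coe, mem_gF]
  constructor
  · intro hx
    obtain ⟨j, hjn, rfl⟩ := hsub hx
    rcases Nat.lt_or_ge j 1 with h | h
    · left; interval_cases j; norm_num
    rcases Nat.lt_or_ge m j with h' | h'
    · rcases Nat.lt_or_ge j n with h'' | h''
      · right; right; right
        refine ⟨n - j, ?_, ?_⟩
        · rw [hSdef]
          refine ⟨by omega, by omega, ?_⟩
          rw [← oneSubDiv hn hjn]
          exact hneg _ hx
        · congr 1; congr 1; omega
      · right; left
        have : j = n := by omega
        subst this
        field_simp
    · right; right; left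
      exact ⟨j, (hSdef j).2 ⟨h, h', hx⟩, rfl⟩
  · rintro (rfl | rfl | ⟨j, hj, rfl⟩ | ⟨j, hj, rfl⟩)
    · exact h0
    · exact h1
    · exact ((hSdef j).1 hj).2.2
    · rw [← oneSubDiv hn (by have := (hSdef j).1 hj; omega : j ≤ n)]
      exact hneg _ ((hSdef j).1 hj).2.2

lemma lowmem_gF {n m : ℕ} (hm : n = 2*m+1) {S : Finset ℕ} (hS : S ⊆ Finset.Icc 1 m)
    {j : ℕ} (hj1 : 1 ≤ j) (hj2 : j ≤ m) : j ∈ S ↔ (j:ℚ)/n ∈ gF n S := by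
  have hn : 0 < n := by omega
  have hb : ∀ a ∈ S, 1 ≤ a ∧ a ≤ m := by
    intro a ha; have := hS ha; simp [Finset.mem_Icc] at this; exact this
  constructor
  · intro h; rw [mem_gF]; right; right; left; exact ⟨j, h, rfl⟩
  · intro h
    rw [mem_gF] at h
    rcases h with h | h | ⟨a, ha, h⟩ | ⟨a, ha, h⟩
    · exfalso
      have : (j:ℚ)/n = ((0:ℕ):ℚ)/n := by rw [h]; norm_num
      have := (div_inj hn).1 this; omega
    · exfalso
      have : (j:ℚ)/n = ((n:ℕ):ℚ)/n := by rw [h]; field_simp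
      have := (div_inj hn).1 this; omega
    · have := (div_inj hn).1 h
      subst this; exact ha
    · exfalso
      have := (div_inj hn).1 h
      have := hb a ha; omega

/-- For odd n and 1 ≤ k ≤ (n+1)/2, the number of subalgebras of L_n with exactly
2k elements is the binomial coefficient C((n-1)/2, k-1). -/
theorem count_subalgebras (n k : ℕ) (hn : 3 ≤ n) (hodd : Odd n)
    (hk1 : 1 ≤ k) (hk2 : k ≤ (n + 1) / 2) :
    {A : Set ℚ | IsSubalg n A ∧ A.ncard = 2 * k}.ncard =
      Nat.choose ((n - 1) / 2) (k - 1) := by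
  classical
  obtain ⟨m, hm⟩ : ∃ m, n = 2*m+1 := by
    obtain ⟨t, ht⟩ := hodd; exact ⟨t, by omega⟩
  have key : {A : Set ℚ | IsSubalg n A ∧ A.ncard = 2 * k}
      = ↑((Finset.powersetCard (k-1) (Finset.Icc 1 m)).image (fun S => (↑(gF n S) : Set ℚ))) := by
    ext A
    simp only [Set.mem_setOf_eq, Finset.coe_image, Set.mem_image, Finset.mem_coe,
      Finset.mem_powersetCard]
    constructor
    · rintro ⟨hA, hcard⟩
      set S : Finset ℕ := (Finset.Icc 1 m).filter (fun j => (j:ℚ)/n ∈ A) with hSdef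
      have hchar : ∀ j : ℕ, j ∈ S ↔ (1 ≤ j ∧ j ≤ m ∧ (j:ℚ)/n ∈ A) := by
        intro j; simp [hSdef, Finset.mem_filter, Finset.mem_Icc, and_assoc]
      have hSsub : S ⊆ Finset.Icc 1 m := Finset.filter_subset _ _
      have hrepr := repr_gF hm hA hchar
      refine ⟨S, ⟨hSsub, ?_⟩, hrepr.symm⟩
      have hc : A.ncard = (gF n S).card := by rw [hrepr, Set.ncard_coe_finset]
      rw [card_gF hm hSsub] at hc
      omega
    · rintro ⟨S, ⟨hSsub, hScard⟩, rfl⟩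
      refine ⟨subalg_gF hm hSsub, ?_⟩
      rw [Set.ncard_coe_finset, card_gF hm hSsub, hScard]
      omega
  rw [key, Set.ncard_coe_finset, Finset.card_image_of_injOn ?_, Finset.card_powersetCard,
    Nat.card_Icc]
  · congr 1; omega
  · intro S1 h1 S2 h2 heq
    rw [Finset.mem_coe, Finset.mem_powersetCard] at h1 h2
    have heq' : gF n S1 = gF n S2 := Finset.coe_inj.1 heq
    ext j
    by_cases hj : 1 ≤ j ∧ j ≤ m
    · rw [lowmem_gF hm h1.1 hj.1 hj.2, lowmem_gF hm h2.1 hj.1 hj.2, heq']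
    · constructor <;> intro h
      · exact absurd (by simpa [Finset.mem_Icc] using h1.1 h) hj
      · exact absurd (by simpa [Finset.mem_Icc] using h2.1 h) hj
end
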